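/- Let 1 < p < ∞ and q with 1/p + 1/q = 1, let N ≥ 1, 𝒩 = {1,...,N}, and let μ ∈ ℝ^𝒩 with ‖μ‖_q = 1. Define h_μ(x) = −Σ_{i∈𝒩} μ_i x_i. Then there exists a sequence (y^n) in ℝ^𝒩 with ‖y^n‖_p → ∞ such that ‖x − y^n‖_p − ‖y^n‖_p → h_μ(x) for every x ∈ ℝ^𝒩, and moreover there is no z ∈ ℝ^𝒩 with h_μ(x) = ‖x − z‖_p − ‖z‖_p for all x ∈ ℝ^𝒩. -/

import Mathlib

open Filter Topology

/-- every `x ↦ -∑ μ_i x_i` with `‖μ‖_q = 1` is a horofunction of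
`ℓᵖ(𝒩, ℝ)`. -/
theorem lp_form_is_horofunction (p q : ℝ) (hp : 1 < p) (hpq : 1/p + 1/q = 1)
    (N : ℕ) (hN : 1 ≤ N) (μ : Fin N → ℝ) (hμ : (∑ i, |μ i| ^ q) ^ (1/q) = 1) :
    (∃ y : ℕ → Fin N → ℝ,
      Tendsto (fun n => (∑ i, |y n i| ^ p) ^ (1/p)) atTop atTop ∧
      ∀ x : Fin N → ℝ,
        Tendsto (fun n =>
            (∑ i, |x i - y n i| ^ p) ^ (1/p) - (∑ i, |y n i| ^ p) ^ (1/p))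
          atTop (𝓝 (-∑ i, μ i * x i))) ∧
    ¬∃ z : Fin N → ℝ, ∀ x : Fin N → ℝ,
      (-∑ i, μ i * x i)
        = (∑ i, |x i - z i| ^ p) ^ (1/p) - (∑ i, |z i| ^ p) ^ (1/p) := by
  have hp0 : (0:ℝ) < p := lt_trans one_pos hp
  have hp0' : p ≠ 0 := ne_of_gt hp0
  have hq1 : 1/q = 1 - 1/p := by linarith
  have hq0 : 0 < q := by
    have h1 : (0:ℝ) < 1/q := by
      rw [hq1]
      have : 1/p < 1 := (div_lt_one hp0).mpr hp
      linarith
    exact one_div_pos.mp h1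
  have hq0' : q ≠ 0 := ne_of_gt hq0
  have hpq' : p * q = p + q := by
    field_simp at hpq
    linarith
  constructor
  · -- existence of the horofunction sequence
    -- the direction vector
    set v : Fin N → ℝ := fun i => |μ i| ^ (q-2) * μ i with hv_def
    have hvzero : ∀ i, μ i = 0 → v i = 0 := by
      intro i h; simp [hv_def, h]
    have habs_v : ∀ i, μ i ≠ 0 → |v i| = |μ i| ^ (q-1) := by
      intro i h
      have hμpos : 0 < |μ i| := abs_pos.mpr h
      calc |v i| = |μ i| ^ (q-2) * |μ i| := by
            rw [hv_def, abs_mul, abs_of_nonneg (Real.rpow_nonneg (abs_nonneg _) _)]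
        _ = |μ i| ^ (q-2) * |μ i| ^ (1:ℝ) := by rw [Real.rpow_one]
        _ = |μ i| ^ (q-1) := by rw [← Real.rpow_add hμpos]; ring_nf
    -- |v i|^p = |μ i|^q
    have hvp : ∀ i, |v i| ^ p = |μ i| ^ q := by
      intro i
      by_cases h : μ i = 0
      · rw [hvzero i h, h]
        simp [Real.zero_rpow hp0', Real.zero_rpow hq0']
      · rw [habs_v i h, ← Real.rpow_mul (abs_nonneg _)]
        congr 1
        linear_combination hpq'
    -- key gradient identity
    have hkey : ∀ i, |v i| ^ (p-2) * v i = μ i := by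
      intro i
      by_cases h : μ i = 0
      · rw [hvzero i h, h, mul_zero]
      · have hμpos : 0 < |μ i| := abs_pos.mpr h
        rw [habs_v i h, ← Real.rpow_mul (abs_nonneg _), hv_def]
        simp only
        rw [← mul_assoc, ← Real.rpow_add hμpos]
        have e : (q-1)*(p-2) + (q-2) = 0 := by linear_combination hpq'
        rw [e, Real.rpow_zero, one_mul]
    -- the q-norm of μ equals 1, hence the sum equals 1
    have hSnonneg : (0:ℝ) ≤ ∑ i, |μ i| ^ q :=
      Finset.sum_nonneg fun i _ => Real.rpow_nonneg (abs_nonneg _) _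
    have hsum_mu : ∑ i, |μ i| ^ q = 1 := by
      have h := congrArg (fun t : ℝ => t ^ q) hμ
      rwa [← Real.rpow_mul hSnonneg, one_div_mul_cancel hq0', Real.rpow_one,
        Real.one_rpow] at h
    have hsum_v : ∑ i, |v i| ^ p = 1 := by
      simp_rw [hvp]; exact hsum_mu
    -- the sequence
    refine ⟨fun n i => ((n:ℝ)+1) * v i, ?_, ?_⟩
    · -- the norms tend to infinity
      have hnorm : ∀ n : ℕ, (∑ i, |((n:ℝ)+1) * v i| ^ p) ^ (1/p) = (n:ℝ)+1 := by
        intro n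
        have hn0 : (0:ℝ) ≤ (n:ℝ)+1 := by positivity
        have : ∀ i, |((n:ℝ)+1) * v i| ^ p = ((n:ℝ)+1) ^ p * |v i| ^ p := by
          intro i
          rw [abs_mul, abs_of_nonneg hn0, Real.mul_rpow hn0 (abs_nonneg _)]
        rw [Finset.sum_congr rfl (fun i _ => this i), ← Finset.mul_sum, hsum_v,
          mul_one, ← Real.rpow_mul hn0, mul_one_div_cancel hp0', Real.rpow_one]
      simp_rw [hnorm]
      exact tendsto_atTop_add_const_right atTop 1 tendsto_natCast_atTop_atTop
    · -- convergence of the horofunction differences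
      intro x
      set F : ℝ → ℝ := fun s => (∑ i, |v i - s * x i| ^ p) ^ (1/p) with hF_def
      have hF0 : F 0 = 1 := by
        simp only [hF_def, zero_mul, sub_zero, hsum_v, Real.one_rpow]
      -- derivative of the inner sum
      have hS : HasDerivAt (fun s => ∑ i, |v i - s * x i| ^ p)
          (∑ i, p * |v i| ^ (p-2) * v i * (-(x i))) 0 := by
        apply HasDerivAt.fun_sum
        intro i _
        have hinner : HasDerivAt (fun s : ℝ => v i - s * x i) (-(x i)) 0 :=
          (hasDerivAt_mul_const (x i)).const_sub (v i)
        have houter := hasDerivAt_abs_rpow (v i - 0 * x i) hp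
        have := HasDerivAt.comp 0 houter hinner
        simpa [Function.comp_def] using this
      -- the derivative value simplifies
      have hD : (∑ i, p * |v i| ^ (p-2) * v i * (-(x i))) = p * (-(∑ i, μ i * x i)) := by
        rw [← Finset.sum_neg_distrib, Finset.mul_sum]
        apply Finset.sum_congr rfl
        intro i _
        rw [mul_assoc p, hkey i]
        ring
      rw [hD] at hS
      -- derivative of F at 0
      have houter1 : HasDerivAt (fun u : ℝ => u ^ (1/p)) (1/p) 1 := by
        have := Real.hasDerivAt_rpow_const (x := 1) (p := 1/p) (Or.inl one_ne_zero)
        simpa using this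
      have hF' : HasDerivAt F (-(∑ i, μ i * x i)) 0 := by
        have h1 : (fun s => ∑ i, |v i - s * x i| ^ p) 0 = 1 := by
          simp only [zero_mul, sub_zero, hsum_v]
        have houterS : HasDerivAt (fun u : ℝ => u ^ (1/p)) (1/p)
            ((fun s => ∑ i, |v i - s * x i| ^ p) 0) := by
          rw [h1]; exact houter1
        have h2 := HasDerivAt.comp 0 houterS hS
        have heq : 1/p * (p * -(∑ i, μ i * x i)) = -(∑ i, μ i * x i) := by
          field_simp
        rw [heq] at h2
        exact h2
      -- pass to the sequence 1/(n+1)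
      have hslope := hasDerivAt_iff_tendsto_slope.mp hF'
      have hseq : Tendsto (fun n : ℕ => 1/((n:ℝ)+1)) atTop (𝓝[≠] (0:ℝ)) := by
        apply tendsto_nhdsWithin_of_tendsto_nhds_of_eventually_within
        · exact tendsto_one_div_add_atTop_nhds_zero_nat
        · filter_upwards with n
          have : (0:ℝ) < 1/((n:ℝ)+1) := by positivity
          exact Set.mem_compl_singleton_iff.mpr (ne_of_gt this)
      have hcomp := hslope.comp hseq
      -- identify the sequence expression with the slope
      have hident : ∀ n : ℕ,
          (∑ i, |x i - ((n:ℝ)+1) * v i| ^ p) ^ (1/p)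
            - (∑ i, |((n:ℝ)+1) * v i| ^ p) ^ (1/p)
          = slope F 0 (1/((n:ℝ)+1)) := by
        intro n
        set c : ℝ := (n:ℝ)+1 with hc_def
        have hc0 : (0:ℝ) < c := by positivity
        have hterm : ∀ i, |x i - c * v i| ^ p = c ^ p * |v i - (1/c) * x i| ^ p := by
          intro i
          have : x i - c * v i = -(c * (v i - (1/c) * x i)) := by
            field_simp; ring
          rw [this, abs_neg, abs_mul, abs_of_nonneg hc0.le,
            Real.mul_rpow hc0.le (abs_nonneg _)]
        have hnormy : (∑ i, |c * v i| ^ p) ^ (1/p) = c := by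
          have : ∀ i, |c * v i| ^ p = c ^ p * |v i| ^ p := by
            intro i
            rw [abs_mul, abs_of_nonneg hc0.le, Real.mul_rpow hc0.le (abs_nonneg _)]
          rw [Finset.sum_congr rfl (fun i _ => this i), ← Finset.mul_sum, hsum_v,
            mul_one, ← Real.rpow_mul hc0.le, mul_one_div_cancel hp0', Real.rpow_one]
        have hfirst : (∑ i, |x i - c * v i| ^ p) ^ (1/p) = c * F (1/c) := by
          rw [Finset.sum_congr rfl (fun i _ => hterm i), ← Finset.mul_sum,
            Real.mul_rpow (Real.rpow_nonneg hc0.le _)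
              (Finset.sum_nonneg fun i _ => Real.rpow_nonneg (abs_nonneg _) _),
            ← Real.rpow_mul hc0.le, mul_one_div_cancel hp0', Real.rpow_one]
        rw [hfirst, hnormy, slope_def_field, hF0, sub_zero, div_div_eq_mul_div, div_one]
        ring
      simp only [Function.comp_def] at hcomp
      exact Filter.Tendsto.congr (fun n => (hident n).symm) hcomp
  · rintro ⟨z, h⟩
    have hmu0 : ∀ i, μ i = 0 := by
      intro i
      have hsingle : (∑ j, |(Pi.single i 1 : Fin N → ℝ) j| ^ p) = 1 := by
        rw [Finset.sum_eq_single i]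
        · simp
        · intro j _ hj
          rw [Pi.single_eq_of_ne hj, abs_zero, Real.zero_rpow hp0']
        · intro hi; exact absurd (Finset.mem_univ i) hi
      have hsum1 : ∀ w : Fin N → ℝ, ∑ j, μ j * (z j + w j) = (∑ j, μ j * z j) + ∑ j, μ j * w j := by
        intro w; simp_rw [mul_add]; rw [Finset.sum_add_distrib]
      have hsum2 : ∀ w : Fin N → ℝ, ∑ j, μ j * (z j - w j) = (∑ j, μ j * z j) - ∑ j, μ j * w j := by
        intro w; simp_rw [mul_sub]; rw [Finset.sum_sub_distrib]
      have hsingle' : (∑ j, μ j * (Pi.single i 1 : Fin N → ℝ) j) = μ i := by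
        rw [Finset.sum_eq_single i]
        · simp
        · intro j _ hj; rw [Pi.single_eq_of_ne hj, mul_zero]
        · intro hi; exact absurd (Finset.mem_univ i) hi
      have h1 := h (z + Pi.single i 1)
      have h2 := h (z - Pi.single i 1)
      simp only [Pi.add_apply, add_sub_cancel_left] at h1
      simp only [Pi.sub_apply, sub_sub_cancel_left, abs_neg] at h2
      rw [hsingle, Real.one_rpow, hsum1, hsingle'] at h1
      rw [hsingle, Real.one_rpow, hsum2, hsingle'] at h2
      linarith
    have hz : (∑ i, |μ i| ^ q) = 0 := by
      apply Finset.sum_eq_zero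
      intro i _
      rw [hmu0 i, abs_zero, Real.zero_rpow hq0']
    rw [hz, Real.zero_rpow (one_div_ne_zero hq0')] at hμ
    exact zero_ne_one hμ
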